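/- Let f ∈ L¹(Ω) and let p ≥ 0 be an integer. Then ∫_{−π}^{π} e^{imω} ( ∫_{−1}^{1} s^p Rf(s, e^{iω}) ds ) dω = 0 for every m ∈ ℤ such that either p − m is odd, or |m| > p and p − m is even. -/

import Mathlib

open MeasureTheory Filter Set

noncomputable section

/-- The point `e^{iω}` on the unit circle. -/
def circlePoint (ω : ℝ) : ℂ := Complex.exp (Complex.I * ω)

/-- The Radon transform `Rf(s, e^{iω}) = ∫_{-1}^{1} f(s e^{iω} + t e^{i(ω+π/2)}) dt`. -/
def radonT (f : ℂ → ℝ) (s ω : ℝ) : ℝ :=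
  ∫ t in (-1 : ℝ)..1, f ((s : ℂ) * circlePoint ω + (t : ℂ) * circlePoint (ω + Real.pi / 2))

lemma abs_circlePoint (ω : ℝ) : ‖circlePoint ω‖ = 1 := by
  simp [circlePoint, Complex.norm_exp]

lemma circlePoint_add_pi_div_two (ω : ℝ) :
    circlePoint (ω + Real.pi / 2) = Complex.I * circlePoint ω := by
  rw [circlePoint, circlePoint,
    show Complex.I * ((ω + Real.pi / 2 : ℝ) : ℂ)
      = Complex.I * (ω : ℂ) + (Real.pi / 2 : ℝ) * Complex.I by push_cast; ring,
    Complex.exp_add]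
  push_cast
  rw [show ((Real.pi:ℂ)/2) * Complex.I = ((Real.pi/2 : ℝ):ℂ) * Complex.I by push_cast; ring,
    Complex.exp_mul_I]
  simp [mul_comm]

lemma point_eq (ω s t : ℝ) :
    (s : ℂ) * circlePoint ω + (t : ℂ) * circlePoint (ω + Real.pi / 2)
      = ((s : ℂ) + (t : ℂ) * Complex.I) * circlePoint ω := by
  rw [circlePoint_add_pi_div_two]; ring

lemma vanish (f : ℂ → ℝ) (hsupp : ∀ z : ℂ, 1 ≤ ‖z‖ → f z = 0)
    (ω s t : ℝ) (h : 1 ≤ s ^ 2 + t ^ 2) :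
    f (((s : ℂ) + (t : ℂ) * Complex.I) * circlePoint ω) = 0 := by
  apply hsupp
  rw [norm_mul, abs_circlePoint, mul_one]
  have h2 : ‖(s : ℂ) + (t : ℂ) * Complex.I‖ ^ 2 = s ^ 2 + t ^ 2 := by
    rw [Complex.sq_norm, Complex.normSq_add_mul_I]
  nlinarith [norm_nonneg ((s : ℂ) + (t : ℂ) * Complex.I)]

lemma mom_integrable (f : ℂ → ℝ) (hf : Integrable f)
    (hsupp : ∀ z : ℂ, 1 ≤ ‖z‖ → f z = 0) (k l : ℕ) :
    Integrable (fun x : ℂ => (f x : ℂ) * x ^ k * (starRingEnd ℂ x) ^ l) := by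
  have hfc : Integrable (fun x : ℂ => (f x : ℂ)) := hf.ofReal
  have heq : (fun x : ℂ => (f x : ℂ) * x ^ k * (starRingEnd ℂ x) ^ l)
      = fun x => (Metric.ball (0 : ℂ) 1).indicator
          (fun x => x ^ k * (starRingEnd ℂ x) ^ l) x * (f x : ℂ) := by
    funext x
    by_cases hx : x ∈ Metric.ball (0 : ℂ) 1
    · rw [Set.indicator_of_mem hx]; ring
    · rw [Set.indicator_of_notMem hx, zero_mul]
      have hx1 : 1 ≤ ‖x‖ := by
        simpa [Metric.mem_ball, Complex.dist_eq, not_lt] using hx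
      rw [hsupp x hx1]; simp
  rw [heq]
  refine Integrable.bdd_mul (c := 1) hfc ?_ ?_
  · exact (((continuous_pow k).mul (Complex.continuous_conj.pow l)).measurable.indicator
      measurableSet_ball).aestronglyMeasurable
  · refine Filter.Eventually.of_forall fun x => ?_
    by_cases hx : x ∈ Metric.ball (0 : ℂ) 1
    · rw [Set.indicator_of_mem hx]
      have hx1 : ‖x‖ ≤ 1 :=
        le_of_lt (by simpa [Metric.mem_ball, Complex.dist_eq] using hx)
      have h0 : (0:ℝ) ≤ ‖x‖ := norm_nonneg x
      calc ‖x ^ k * (starRingEnd ℂ x) ^ l‖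
          = ‖x‖ ^ k * ‖x‖ ^ l := by
            simp [norm_mul, norm_pow]
        _ ≤ 1 := by
            calc ‖x‖ ^ k * ‖x‖ ^ l ≤ 1 * 1 :=
              mul_le_mul (pow_le_one₀ h0 hx1) (pow_le_one₀ h0 hx1) (by positivity) one_pos.le
            _ = 1 := one_mul 1
    · rw [Set.indicator_of_notMem hx]; simp

lemma exp_int_integral (n : ℤ) (hn : n ≠ 0) :
    ∫ ω in Ioc (-Real.pi) Real.pi, Complex.exp (Complex.I * (n : ℂ) * (ω : ℂ)) = 0 := by
  have hle : -Real.pi ≤ Real.pi := by linarith [Real.pi_pos]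
  rw [← intervalIntegral.integral_of_le hle]
  have hc : (Complex.I * (n : ℂ)) ≠ 0 :=
    mul_ne_zero Complex.I_ne_zero (by exact_mod_cast hn)
  rw [integral_exp_mul_complex hc]
  have e1 : Complex.exp (Complex.I * (n : ℂ) * ((Real.pi : ℝ) : ℂ)) = (-1 : ℂ) ^ n := by
    rw [show Complex.I * (n : ℂ) * ((Real.pi : ℝ) : ℂ)
        = (n : ℂ) * ((Real.pi : ℂ) * Complex.I) by ring,
      Complex.exp_int_mul, Complex.exp_pi_mul_I]
  have e2 : Complex.exp (Complex.I * (n : ℂ) * ((-Real.pi : ℝ) : ℂ)) = (-1 : ℂ) ^ n := by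
    push_cast
    rw [show Complex.I * (n : ℂ) * (-(Real.pi : ℂ))
        = (-n : ℤ) * ((Real.pi : ℂ) * Complex.I) by push_cast; ring,
      Complex.exp_int_mul, Complex.exp_pi_mul_I, zpow_neg, ← inv_zpow, inv_neg, inv_one]
  rw [e1, e2, sub_self, zero_div]

lemma inner_expand (f : ℂ → ℝ) (hf : Integrable f)
    (hsupp : ∀ z : ℂ, 1 ≤ ‖z‖ → f z = 0) (p : ℕ) (ω : ℝ) :
    (∫ s in (-1 : ℝ)..1, (s : ℂ) ^ p * (radonT f s ω : ℂ))
      = ∑ k ∈ Finset.range (p + 1),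
          ((p.choose k : ℂ) * (2 : ℂ)⁻¹ ^ p
              * Complex.exp (Complex.I * (((p : ℤ) - 2 * k : ℤ) : ℂ) * (ω : ℂ)))
            * ∫ x : ℂ, (f x : ℂ) * x ^ k * (starRingEnd ℂ x) ^ (p - k) := by
  set θ : ℂ := circlePoint ω with hθ
  set u : Circle := Circle.exp ω with huu
  have hu : (u : ℂ) = θ := by
    rw [huu, Circle.coe_exp, hθ, circlePoint, mul_comm]
  -- Step A : cast to a real integral
  have cast1 : (∫ s in (-1 : ℝ)..1, (s : ℂ) ^ p * (radonT f s ω : ℂ))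
      = ((∫ s in (-1 : ℝ)..1, s ^ p * radonT f s ω : ℝ) : ℂ) := by
    rw [← intervalIntegral.integral_ofReal]
    apply intervalIntegral.integral_congr
    intro s _
    push_cast
    ring
  -- Step B1 : extend the inner integral to ℝ
  have B1 : ∀ s : ℝ, s ^ p * radonT f s ω
      = ∫ t : ℝ, s ^ p * f (((s : ℂ) + (t : ℂ) * Complex.I) * θ) := by
    intro s
    have hsub : Function.support (fun t : ℝ => s ^ p * f (((s : ℂ) + (t : ℂ) * Complex.I) * θ))
        ⊆ Ioc (-1 : ℝ) 1 := by
      intro t ht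
      rw [Function.mem_support] at ht
      by_contra hnot
      apply ht
      rw [Set.mem_Ioc] at hnot
      push_neg at hnot
      have ht2 : (1 : ℝ) ≤ t ^ 2 := by
        rcases le_or_gt t (-1) with h | h
        · nlinarith
        · nlinarith [hnot h]
      have h1 : 1 ≤ s ^ 2 + t ^ 2 := by nlinarith [sq_nonneg s]
      show s ^ p * f (((s : ℂ) + (t : ℂ) * Complex.I) * θ) = 0
      rw [hθ, vanish f hsupp ω s t h1, mul_zero]
    unfold radonT
    rw [← intervalIntegral.integral_eq_integral_of_support_subset hsub,
      ← intervalIntegral.integral_const_mul]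
    apply intervalIntegral.integral_congr
    intro t _
    simp only
    rw [point_eq, ← hθ]
  -- rotation as a measure preserving map
  have hTq : ∀ q : ℝ × ℝ, (rotation u) (Complex.measurableEquivRealProd.symm q)
      = ((q.1 : ℂ) + (q.2 : ℂ) * Complex.I) * θ := by
    intro q
    rw [rotation_apply, hu, Complex.measurableEquivRealProd_symm_apply, mul_comm]
    congr 1
    exact (Complex.mk_eq_add_mul_I q.1 q.2)
  have hT : MeasurePreserving
      (fun q : ℝ × ℝ => (rotation u) (Complex.measurableEquivRealProd.symm q))
      volume volume :=
    (rotation u).measurePreserving.comp Complex.volume_preserving_equiv_real_prod.symm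
  have hemb : MeasurableEmbedding
      (fun q : ℝ × ℝ => (rotation u) (Complex.measurableEquivRealProd.symm q)) :=
    ((rotation u).toHomeomorph.measurableEmbedding).comp
      Complex.measurableEquivRealProd.symm.measurableEmbedding
  have hbase : Integrable
      (fun q : ℝ × ℝ => f ((rotation u) (Complex.measurableEquivRealProd.symm q))) :=
    (hT.integrable_comp_emb hemb).mpr hf
  -- Step B2 : joint integrability
  have hint : Integrable
      (fun q : ℝ × ℝ => q.1 ^ p * f (((q.1 : ℂ) + (q.2 : ℂ) * Complex.I) * θ)) := by
    have heq2 : (fun q : ℝ × ℝ => q.1 ^ p * f (((q.1 : ℂ) + (q.2 : ℂ) * Complex.I) * θ))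
        = fun q : ℝ × ℝ => ({q : ℝ × ℝ | q.1 ^ 2 + q.2 ^ 2 < 1}.indicator
            (fun q : ℝ × ℝ => q.1 ^ p) q)
          * f ((rotation u) (Complex.measurableEquivRealProd.symm q)) := by
      funext q
      rw [hTq]
      by_cases hq : q ∈ {q : ℝ × ℝ | q.1 ^ 2 + q.2 ^ 2 < 1}
      · rw [Set.indicator_of_mem hq]
      · rw [Set.indicator_of_notMem hq, zero_mul, hθ,
          vanish f hsupp ω q.1 q.2 (not_lt.mp hq), mul_zero]
    rw [heq2]
    refine hbase.bdd_mul (c := 1) ?_ ?_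
    · refine (((continuous_fst.pow p).measurable).indicator ?_).aestronglyMeasurable
      exact (isOpen_lt ((continuous_fst.pow 2).add (continuous_snd.pow 2))
        continuous_const).measurableSet
    · refine Filter.Eventually.of_forall fun q => ?_
      by_cases hq : q ∈ {q : ℝ × ℝ | q.1 ^ 2 + q.2 ^ 2 < 1}
      · rw [Set.indicator_of_mem hq]
        have h1 : |q.1| ≤ 1 := by
          have := hq
          simp only [Set.mem_setOf_eq] at this
          nlinarith [sq_abs q.1, sq_nonneg q.2, abs_nonneg q.1]
        rw [Real.norm_eq_abs, abs_pow]
        exact pow_le_one₀ (abs_nonneg _) h1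
      · rw [Set.indicator_of_notMem hq]; simp
  -- Step B3 : Fubini
  have fub : ∫ s : ℝ, (∫ t : ℝ, s ^ p * f (((s : ℂ) + (t : ℂ) * Complex.I) * θ))
      = ∫ q : ℝ × ℝ, q.1 ^ p * f (((q.1 : ℂ) + (q.2 : ℂ) * Complex.I) * θ) := by
    rw [show (volume : Measure (ℝ × ℝ)) = (volume : Measure ℝ).prod volume from
      Measure.volume_eq_prod ℝ ℝ] at hint ⊢
    exact MeasureTheory.integral_integral hint
  -- Step B2' : extend the outer integral to ℝ
  have B2 : (∫ s in (-1 : ℝ)..1, s ^ p * radonT f s ω : ℝ)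
      = ∫ s : ℝ, (∫ t : ℝ, s ^ p * f (((s : ℂ) + (t : ℂ) * Complex.I) * θ)) := by
    have hsub : Function.support
        (fun s : ℝ => ∫ t : ℝ, s ^ p * f (((s : ℂ) + (t : ℂ) * Complex.I) * θ))
        ⊆ Ioc (-1 : ℝ) 1 := by
      intro s hs
      rw [Function.mem_support] at hs
      by_contra hnot
      apply hs
      rw [Set.mem_Ioc] at hnot
      push_neg at hnot
      have hs2 : (1 : ℝ) ≤ s ^ 2 := by
        rcases le_or_gt s (-1) with h | h
        · nlinarith
        · nlinarith [hnot h]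
      have hzero : (fun t : ℝ => s ^ p * f (((s : ℂ) + (t : ℂ) * Complex.I) * θ))
          = fun _ => 0 := by
        funext t
        have : 1 ≤ s ^ 2 + t ^ 2 := by nlinarith [sq_nonneg t]
        rw [hθ, vanish f hsupp ω s t this, mul_zero]
      show (∫ t : ℝ, s ^ p * f (((s : ℂ) + (t : ℂ) * Complex.I) * θ)) = 0
      rw [hzero, integral_zero]
    rw [← intervalIntegral.integral_eq_integral_of_support_subset hsub]
    apply intervalIntegral.integral_congr
    intro s _
    exact B1 s
  -- Step B4 : from ℝ × ℝ to ℂ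
  have e3 : ∫ q : ℝ × ℝ, q.1 ^ p * f (((q.1 : ℂ) + (q.2 : ℂ) * Complex.I) * θ)
      = ∫ z : ℂ, z.re ^ p * f (z * θ) := by
    rw [← Complex.volume_preserving_equiv_real_prod.integral_comp
      Complex.measurableEquivRealProd.measurableEmbedding
      (fun q : ℝ × ℝ => q.1 ^ p * f (((q.1 : ℂ) + (q.2 : ℂ) * Complex.I) * θ))]
    congr 1
    funext z
    rw [Complex.measurableEquivRealProd_apply]
    simp only
    rw [Complex.re_add_im]
  -- Step B5 : rotate back
  have e4 : ∫ z : ℂ, z.re ^ p * f (z * θ)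
      = ∫ x : ℂ, ((x * (starRingEnd ℂ θ)).re) ^ p * f x := by
    have hmul : (starRingEnd ℂ θ) * θ = 1 := by
      rw [mul_comm, Complex.mul_conj, Complex.normSq_eq_norm_sq, hθ, abs_circlePoint]
      norm_num
    rw [← MeasureTheory.integral_comp (rotation u⁻¹) (fun z : ℂ => z.re ^ p * f (z * θ))]
    congr 1
    funext x
    rw [rotation_apply, Circle.coe_inv_eq_conj, hu, mul_comm (starRingEnd ℂ θ) x,
      mul_assoc, hmul, mul_one]
  -- Step C : binomial expansion
  have hre : ∀ x : ℂ, (((x * (starRingEnd ℂ θ)).re : ℝ) : ℂ)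
      = (x * (starRingEnd ℂ θ) + (starRingEnd ℂ x) * θ) * (2 : ℂ)⁻¹ := by
    intro x
    have h2 := Complex.add_conj (x * (starRingEnd ℂ θ))
    rw [map_mul, Complex.conj_conj] at h2
    rw [h2]
    push_cast
    ring
  have expand : ∀ x : ℂ, ((((x * (starRingEnd ℂ θ)).re ^ p * f x : ℝ)) : ℂ)
      = ∑ k ∈ Finset.range (p + 1),
          ((p.choose k : ℂ) * (2 : ℂ)⁻¹ ^ p * ((starRingEnd ℂ θ) ^ k * θ ^ (p - k)))
            * ((f x : ℂ) * x ^ k * (starRingEnd ℂ x) ^ (p - k)) := by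
    intro x
    push_cast
    rw [hre, mul_pow, add_pow, Finset.sum_mul, Finset.sum_mul]
    apply Finset.sum_congr rfl
    intro k _
    ring
  have castC : ((∫ x : ℂ, (x * (starRingEnd ℂ θ)).re ^ p * f x : ℝ) : ℂ)
      = ∫ x : ℂ, (((x * (starRingEnd ℂ θ)).re ^ p * f x : ℝ) : ℂ) :=
    (integral_ofReal (𝕜 := ℂ)).symm
  rw [cast1, B2, fub, e3, e4, castC]
  simp_rw [expand]
  rw [MeasureTheory.integral_finset_sum _
    (fun k _ => ((mom_integrable f hf hsupp k (p - k)).const_mul _))]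
  apply Finset.sum_congr rfl
  intro k hk
  have hk' : k ≤ p := Nat.lt_succ_iff.mp (Finset.mem_range.mp hk)
  have hconj : starRingEnd ℂ θ = Complex.exp (-(Complex.I * (ω : ℂ))) := by
    rw [hθ, circlePoint, ← Complex.exp_conj]
    congr 1
    simp
  have hθe : θ = Complex.exp (Complex.I * (ω : ℂ)) := by rw [hθ, circlePoint]
  have hc2 : (starRingEnd ℂ θ) ^ k * θ ^ (p - k)
      = Complex.exp (Complex.I * (((p : ℤ) - 2 * k : ℤ) : ℂ) * (ω : ℂ)) := by
    rw [hconj, hθe, ← Complex.exp_nat_mul, ← Complex.exp_nat_mul, ← Complex.exp_add]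
    congr 1
    push_cast [Nat.cast_sub hk']
    ring
  rw [MeasureTheory.integral_const_mul, hc2]

/-- Gelfand–Graev–Helgason–Ludwig moment conditions (Proposition 6.1). -/
theorem stmt6 (f : ℂ → ℝ) (hf : Integrable f)
    (hsupp : ∀ z : ℂ, 1 ≤ ‖z‖ → f z = 0)
    (p : ℕ) (m : ℤ)
    (hm : Odd ((p : ℤ) - m) ∨ ((p : ℤ) < |m| ∧ Even ((p : ℤ) - m))) :
    ∫ ω in Ioc (-Real.pi) Real.pi,
      Complex.exp (Complex.I * (m : ℂ) * (ω : ℂ)) *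
        ∫ s in (-1 : ℝ)..1, (s : ℂ) ^ p * (radonT f s ω : ℂ) = 0 := by
  set c : ℕ → ℂ := fun k => ∫ x : ℂ, (f x : ℂ) * x ^ k * (starRingEnd ℂ x) ^ (p - k) with hc
  have key : ∀ ω : ℝ,
      Complex.exp (Complex.I * (m : ℂ) * (ω : ℂ)) *
        ∫ s in (-1 : ℝ)..1, (s : ℂ) ^ p * (radonT f s ω : ℂ)
      = ∑ k ∈ Finset.range (p + 1),
          ((p.choose k : ℂ) * (2 : ℂ)⁻¹ ^ p * c k)
            * Complex.exp (Complex.I * ((m + ((p : ℤ) - 2 * k) : ℤ) : ℂ) * (ω : ℂ)) := by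
    intro ω
    rw [inner_expand f hf hsupp p ω, Finset.mul_sum]
    refine Finset.sum_congr rfl fun k _ => ?_
    rw [show Complex.exp (Complex.I * (m : ℂ) * (ω : ℂ)) *
          (((p.choose k : ℂ) * (2 : ℂ)⁻¹ ^ p
              * Complex.exp (Complex.I * (((p : ℤ) - 2 * k : ℤ) : ℂ) * (ω : ℂ))) * c k)
        = ((p.choose k : ℂ) * (2 : ℂ)⁻¹ ^ p * c k)
            * (Complex.exp (Complex.I * (m : ℂ) * (ω : ℂ))
              * Complex.exp (Complex.I * (((p : ℤ) - 2 * k : ℤ) : ℂ) * (ω : ℂ))) from by ring,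
      ← Complex.exp_add]
    congr 1
    push_cast
    ring
  simp_rw [key]
  rw [integral_finset_sum]
  · refine Finset.sum_eq_zero fun k hk => ?_
    have hn : (m + ((p : ℤ) - 2 * k) : ℤ) ≠ 0 := by
      have hk' : k ≤ p := by simpa [Nat.lt_succ_iff] using Finset.mem_range.mp hk
      intro h0
      rcases hm with hodd | ⟨hlt, _⟩
      · obtain ⟨j, hj⟩ := hodd; omega
      · rcases lt_abs.mp hlt with h | h <;> omega
    rw [MeasureTheory.integral_const_mul, exp_int_integral _ hn, mul_zero]
  · intro k _
    have hcont : Continuous fun ω : ℝ =>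
        ((p.choose k : ℂ) * (2 : ℂ)⁻¹ ^ p * c k)
          * Complex.exp (Complex.I * ((m + ((p : ℤ) - 2 * k) : ℤ) : ℂ) * (ω : ℂ)) := by
      fun_prop
    exact hcont.integrableOn_Ioc
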